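/- Let A be a q×n complex matrix, W a nonzero n×q complex matrix, m a positive integer, and k = max(Ind(AW), Ind(WA)). Then the range of A^{Ⓦ_m,W,†} equals the range of (WA)^k, where A^{Ⓦ_m,W,†} = W·A^{Ⓦ_m,W}·W·A·A^†. -/
import Mathlib


open Matrix

/-- Index of a square matrix: least `d` with `rank (B^d) = rank (B^(d+1))`. -/
noncomputable def matInd {ι : Type*} [Fintype ι] [DecidableEq ι] (B : Matrix ι ι ℂ) : ℕ :=
  sInf {d : ℕ | (B ^ d).rank = (B ^ (d + 1)).rank}

/-- `X` is the Moore-Penrose inverse of `A` (four Penrose equations). -/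
noncomputable def IsMP {ι κ : Type*} [Fintype ι] [Fintype κ] (A : Matrix ι κ ℂ) (X : Matrix κ ι ℂ) : Prop :=
  A * X * A = A ∧ X * A * X = X ∧ (A * X)ᴴ = A * X ∧ (X * A)ᴴ = X * A

/-- Column space (range) of a matrix. -/
noncomputable def mrange {ι κ : Type*} [Fintype κ] (M : Matrix ι κ ℂ) : Submodule ℂ (ι → ℂ) :=
  LinearMap.range M.mulVecLin

/-- Null space of a matrix. -/
noncomputable def mker {ι κ : Type*} [Fintype κ] (M : Matrix ι κ ℂ) : Submodule ℂ (κ → ℂ) :=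
  LinearMap.ker M.mulVecLin

/-- `X` is the core-EP inverse of `B`. -/
noncomputable def IsCoreEP {ι : Type*} [Fintype ι] [DecidableEq ι] (B X : Matrix ι ι ℂ) : Prop :=
  X * B * X = X ∧ mrange X = mrange (B ^ matInd B) ∧ mrange Xᴴ = mrange (B ^ matInd B)

/-- `X` is the Drazin inverse of `B`. -/
noncomputable def IsDrazin {ι : Type*} [Fintype ι] [DecidableEq ι] (B X : Matrix ι ι ℂ) : Prop :=
  X * B * X = X ∧ B * X = X * B ∧ B ^ (matInd B + 1) * X = B ^ matInd B

/-- `X` is the group inverse of `B`. -/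
noncomputable def IsGroupInv {ι : Type*} [Fintype ι] (B X : Matrix ι ι ℂ) : Prop :=
  B * X * B = B ∧ X * B * X = X ∧ B * X = X * B

/-- Frobenius norm of a matrix. -/
noncomputable def frobNorm {ι κ : Type*} [Fintype ι] [Fintype κ] (M : Matrix ι κ ℂ) : ℝ :=
  Real.sqrt (∑ i, ∑ j, ‖M i j‖ ^ 2)

section Aux
set_option linter.unusedSectionVars false
variable {ι κ μ : Type*} [Fintype ι] [Fintype κ] [Fintype μ]

lemma mrange_mul_le (M : Matrix ι κ ℂ) (N : Matrix κ μ ℂ) :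
    mrange (M * N) ≤ mrange M := by
  rw [mrange, mrange, Matrix.mulVecLin_mul]
  exact LinearMap.range_comp_le_range _ _

lemma mrange_mul (M : Matrix ι κ ℂ) (N : Matrix κ μ ℂ) :
    mrange (M * N) = (mrange N).map M.mulVecLin := by
  rw [mrange, mrange, Matrix.mulVecLin_mul, LinearMap.range_comp]

lemma matrix_eq_of_mulVec [DecidableEq κ] {M N : Matrix ι κ ℂ}
    (h : ∀ v, M *ᵥ v = N *ᵥ v) : M = N := by
  ext i j
  have := congr_fun (h (Pi.single j 1)) i
  rwa [Matrix.mulVec_single_one, Matrix.mulVec_single_one] at this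

lemma finrank_mrange (M : Matrix ι κ ℂ) :
    Module.finrank ℂ (mrange M) = M.rank := rfl

lemma matInd_mem [DecidableEq ι] (B : Matrix ι ι ℂ) :
    (B ^ matInd B).rank = (B ^ (matInd B + 1)).rank := by
  have hanti : ∀ d : ℕ, (B ^ (d + 1)).rank ≤ (B ^ d).rank := by
    intro d
    rw [pow_succ]
    exact Matrix.rank_mul_le_left _ _
  have hne : {d : ℕ | (B ^ d).rank = (B ^ (d + 1)).rank}.Nonempty := by
    by_contra h
    rw [Set.not_nonempty_iff_eq_empty] at h
    have hlt : ∀ d : ℕ, (B ^ (d + 1)).rank < (B ^ d).rank := by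
      intro d
      refine lt_of_le_of_ne (hanti d) ?_
      intro he
      have hd : d ∈ {d : ℕ | (B ^ d).rank = (B ^ (d + 1)).rank} := he.symm
      rw [h] at hd
      exact hd
    have key : ∀ j : ℕ, (B ^ j).rank + j ≤ (B ^ 0).rank := by
      intro j
      induction j with
      | zero => simp
      | succ t ih => have := hlt t; omega
    have := key ((B ^ 0).rank + 1)
    omega
  exact Nat.sInf_mem hne

lemma mrange_pow_succ_eq [DecidableEq ι] (B : Matrix ι ι ℂ) :
    mrange (B ^ (matInd B + 1)) = mrange (B ^ matInd B) := by
  refine Submodule.eq_of_le_of_finrank_le ?_ ?_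
  · rw [pow_succ]; exact mrange_mul_le _ _
  · rw [finrank_mrange, finrank_mrange, matInd_mem]

lemma mrange_pow_stab [DecidableEq ι] (B : Matrix ι ι ℂ) :
    ∀ j, matInd B ≤ j → mrange (B ^ j) = mrange (B ^ matInd B) := by
  intro j hj
  obtain ⟨t, rfl⟩ := Nat.exists_eq_add_of_le hj
  induction t with
  | zero => rfl
  | succ s ih =>
    have h1 : matInd B + (s + 1) = (matInd B + s) + 1 := by omega
    rw [h1, pow_succ', mrange_mul, ih (Nat.le_add_right _ _), ← mrange_mul, ← pow_succ',
      mrange_pow_succ_eq]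

lemma mul_eq_of_range_le [DecidableEq μ] {X B : Matrix ι ι ℂ} {M : Matrix ι μ ℂ}
    (hX : X * B * X = X) (hM : mrange M ≤ mrange X) : X * B * M = M := by
  apply matrix_eq_of_mulVec
  intro v
  have hmem : M *ᵥ v ∈ mrange X := hM ⟨v, rfl⟩
  obtain ⟨u, hu⟩ := hmem
  have hu' : X *ᵥ u = M *ᵥ v := hu
  calc (X * B * M) *ᵥ v = (X * B) *ᵥ (M *ᵥ v) := by rw [← Matrix.mulVec_mulVec]
    _ = (X * B) *ᵥ (X *ᵥ u) := by rw [hu']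
    _ = (X * B * X) *ᵥ u := by rw [Matrix.mulVec_mulVec]
    _ = M *ᵥ v := by rw [hX, hu']

end Aux

theorem stmt3 {q n : ℕ} (A : Matrix (Fin q) (Fin n) ℂ) (W : Matrix (Fin n) (Fin q) ℂ)
    (hW : W ≠ 0) (m : ℕ) (hm : 0 < m) (k : ℕ)
    (hk : k = max (matInd (A * W)) (matInd (W * A)))
    (Adag : Matrix (Fin n) (Fin q) ℂ) (hAdag : IsMP A Adag)
    (WAcep : Matrix (Fin n) (Fin n) ℂ) (hWAcep : IsCoreEP (W * A) WAcep)
    (AepW AWGm : Matrix (Fin q) (Fin n) ℂ) (AWGMP : Matrix (Fin n) (Fin q) ℂ)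
    (hAepW : AepW = A * (WAcep * WAcep))
    (hAWGm : AWGm = (AepW * W) ^ m * AepW * (W * A) ^ m)
    (hAWGMP : AWGMP = W * AWGm * W * A * Adag) :
    mrange AWGMP = mrange ((W * A) ^ k) := by
  obtain ⟨hX1, hX2, -⟩ := hWAcep
  have hdk : matInd (W * A) ≤ k := hk ▸ le_max_right _ _
  set B : Matrix (Fin n) (Fin n) ℂ := W * A with hB
  set X : Matrix (Fin n) (Fin n) ℂ := WAcep with hXd
  -- key: X * B^(j+1) = B^j for matInd B ≤ j
  have keyXB : ∀ j, matInd B ≤ j → X * B ^ (j + 1) = B ^ j := by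
    intro j hj
    have h1 : mrange (B ^ j) ≤ mrange X := by
      rw [hX2, mrange_pow_stab B j hj]
    calc X * B ^ (j + 1) = X * B * B ^ j := by rw [pow_succ', ← mul_assoc]
      _ = B ^ j := mul_eq_of_range_le hX1 h1
  have key2 : ∀ j, matInd B ≤ j → B * (X * X) * B ^ (j + 2) = B ^ (j + 1) := by
    intro j hj
    have e1 : X * B ^ (j + 2) = B ^ (j + 1) := keyXB (j + 1) (le_trans hj (Nat.le_succ _))
    calc B * (X * X) * B ^ (j + 2) = B * (X * (X * B ^ (j + 2))) := by
          simp only [mul_assoc]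
      _ = B * (X * B ^ (j + 1)) := by rw [e1]
      _ = B * B ^ j := by rw [keyXB j hj]
      _ = B ^ (j + 1) := (pow_succ' B j).symm
  have keyPow : ∀ t, (B * (X * X)) ^ t * B ^ (t + matInd B + 1) = B ^ (matInd B + 1) := by
    intro t
    induction t with
    | zero => simp
    | succ s ih =>
      calc (B * (X * X)) ^ (s + 1) * B ^ (s + 1 + matInd B + 1)
          = (B * (X * X)) ^ s * (B * (X * X) * B ^ (s + matInd B + 2)) := by
            rw [pow_succ, mul_assoc, show s + 1 + matInd B + 1 = s + matInd B + 2 by omega]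
        _ = (B * (X * X)) ^ s * B ^ (s + matInd B + 1) := by
            rw [key2 (s + matInd B) (Nat.le_add_left _ _)]
        _ = B ^ (matInd B + 1) := ih
  have keyW : ∀ (t : ℕ) (C : Matrix (Fin q) (Fin n) ℂ), W * (C * W) ^ t = (W * C) ^ t * W := by
    intro t C
    induction t with
    | zero => simp
    | succ s ih =>
      calc W * (C * W) ^ (s + 1) = W * (C * W) ^ s * (C * W) := by
            rw [pow_succ, ← Matrix.mul_assoc]
        _ = (W * C) ^ s * W * (C * W) := by rw [ih]
        _ = (W * C) ^ s * (W * C) * W := by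
            rw [Matrix.mul_assoc ((W * C) ^ s) W (C * W), ← Matrix.mul_assoc W C W,
              ← Matrix.mul_assoc ((W * C) ^ s) (W * C) W]
        _ = (W * C) ^ (s + 1) * W := by rw [pow_succ]
  have e0 : W * AWGm = (B * (X * X)) ^ (m + 1) * B ^ m := by
    rw [hAWGm, hAepW]
    rw [← Matrix.mul_assoc W ((A * (X * X) * W) ^ m * (A * (X * X))) (B ^ m)]
    rw [← Matrix.mul_assoc W ((A * (X * X) * W) ^ m) (A * (X * X))]
    rw [keyW m (A * (X * X))]
    rw [Matrix.mul_assoc ((W * (A * (X * X))) ^ m) W (A * (X * X))]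
    rw [← pow_succ (W * (A * (X * X))) m]
    rw [← Matrix.mul_assoc W A (X * X), ← hB]
  have hid : AWGMP = (B * (X * X)) ^ (m + 1) * B ^ m * W * A * Adag := by
    rw [hAWGMP, e0]
  have hmain : AWGMP * (A * B ^ (matInd B + 1)) = B ^ (matInd B + 1) := by
    rw [hid]
    simp only [Matrix.mul_assoc]
    rw [← Matrix.mul_assoc A Adag (A * B ^ (matInd B + 1))]
    rw [← Matrix.mul_assoc (A * Adag) A (B ^ (matInd B + 1))]
    rw [hAdag.1]
    rw [← Matrix.mul_assoc W A (B ^ (matInd B + 1)), ← hB]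
    rw [← pow_succ' B (matInd B + 1)]
    rw [← pow_add B m (matInd B + 1 + 1)]
    rw [show m + (matInd B + 1 + 1) = m + 1 + matInd B + 1 by ring]
    exact keyPow (m + 1)
  have hfw : mrange AWGMP ≤ mrange (B ^ k) := by
    have h1 : mrange AWGMP ≤ mrange ((B * (X * X)) ^ (m + 1)) := by
      rw [hid]
      exact le_trans (mrange_mul_le _ _) (le_trans (mrange_mul_le _ _)
        (le_trans (mrange_mul_le _ _) (mrange_mul_le _ _)))
    refine le_trans h1 ?_
    rw [pow_succ']
    refine le_trans (mrange_mul_le _ _) ?_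
    calc mrange (B * (X * X)) = (mrange (X * X)).map B.mulVecLin := mrange_mul _ _
      _ ≤ (mrange X).map B.mulVecLin := Submodule.map_mono (mrange_mul_le _ _)
      _ = (mrange (B ^ matInd B)).map B.mulVecLin := by rw [hX2]
      _ = mrange (B * B ^ matInd B) := (mrange_mul _ _).symm
      _ = mrange (B ^ (matInd B + 1)) := by rw [← pow_succ']
      _ = mrange (B ^ matInd B) := mrange_pow_succ_eq B
      _ = mrange (B ^ k) := (mrange_pow_stab B k hdk).symm
  have hbk : mrange (B ^ k) ≤ mrange AWGMP := by
    calc mrange (B ^ k) = mrange (B ^ matInd B) := mrange_pow_stab B k hdk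
      _ = mrange (B ^ (matInd B + 1)) := (mrange_pow_succ_eq B).symm
      _ = mrange (AWGMP * (A * B ^ (matInd B + 1))) := by rw [hmain]
      _ ≤ mrange AWGMP := mrange_mul_le _ _
  exact le_antisymm hfw hbk
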